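/- arXiv:0710.4023 — 2 statements merged into one kernel-verified Lean document; each statement's English description precedes it below -/
import Mathlib

section
/- For every positive integer n, ∑_{k=1}^n binom(n,k)(-1)^{k+1} H_k / k = H_n^{(2)}, where H_k is the k-th harmonic number and H_n^{(2)} = ∑_{k=1}^n 1/k^2. -/
open Finset

lemma alt_range (m j : ℕ) :
    ∑ k ∈ Finset.range (j+1), (-1:ℝ)^k * ((m+1).choose k) = (-1)^j * (m.choose j) := by
  induction j with
  | zero => simp
  | succ j ih =>
      rw [Finset.sum_range_succ, ih, Nat.choose_succ_succ]
      push_cast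
      ring

lemma alt_icc (m j : ℕ) (hj : 1 ≤ j) (hjm : j ≤ m + 1) :
    ∑ k ∈ Finset.Icc j (m+1), (-1:ℝ)^k * ((m+1).choose k) = (-1)^j * (m.choose (j-1)) := by
  have h1 : Finset.Icc j (m+1) = Finset.Ico j (m+2) := by rw [show m + 2 = (m+1)+1 from rfl, Finset.Ico_add_one_right_eq_Icc]
  have hsplit : (∑ k ∈ Finset.range j, (-1:ℝ)^k * ((m+1).choose k))
      + ∑ k ∈ Finset.Ico j (m+2), (-1:ℝ)^k * ((m+1).choose k)
      = ∑ k ∈ Finset.range (m+2), (-1:ℝ)^k * ((m+1).choose k) := by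
    rw [Finset.range_eq_Ico, Finset.range_eq_Ico]
    exact Finset.sum_Ico_consecutive (fun k => (-1:ℝ)^k * ((m+1).choose k)) (Nat.zero_le j) (show j ≤ m + 2 by omega)
  have h2 := alt_range m (m+1)
  have h3 : (m.choose (m+1) : ℝ) = 0 := by
    simp [Nat.choose_eq_zero_of_lt (Nat.lt_succ_self m)]
  rw [show m + 2 = (m+1) + 1 from rfl, h2, h3, mul_zero] at hsplit
  obtain ⟨j', rfl⟩ : ∃ j', j = j' + 1 := ⟨j - 1, by omega⟩
  have h4 := alt_range m j'
  rw [h1]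
  have := hsplit
  rw [show j' + 1 = j' + 1 from rfl] at this
  have h5 : ∑ k ∈ Finset.range (j'+1), (-1:ℝ)^k * ((m+1).choose k) = (-1)^j' * (m.choose j') := h4
  rw [h5] at hsplit
  have : ∑ k ∈ Finset.Ico (j'+1) (m+2), (-1:ℝ)^k * ((m+1).choose k)
      = -((-1)^j' * (m.choose j')) := by linarith
  rw [this]
  simp
  ring

lemma lemB (m : ℕ) : ∑ k ∈ Finset.Icc 1 (m+1), (-1:ℝ)^(k+1) * ((m+1).choose k) = 1 := by
  have h := alt_icc m 1 le_rfl (by omega)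
  have h2 : ∑ k ∈ Finset.Icc 1 (m+1), (-1:ℝ)^(k+1) * ((m+1).choose k)
      = -∑ k ∈ Finset.Icc 1 (m+1), (-1:ℝ)^k * ((m+1).choose k) := by
    rw [← Finset.sum_neg_distrib]
    exact Finset.sum_congr rfl fun k _ => by ring
  rw [h2, h]
  simp

lemma lemA (m : ℕ) :
    ∑ k ∈ Finset.Icc 1 (m+1), (-1:ℝ)^(k+1) * ((m+1).choose k) *
      (∑ j ∈ Finset.Icc 1 k, (1:ℝ)/j) = 1/(m+1) := by
  have h1 : ∀ k ∈ Finset.Icc 1 (m+1),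
      (-1:ℝ)^(k+1) * ((m+1).choose k) * (∑ j ∈ Finset.Icc 1 k, (1:ℝ)/j)
      = ∑ j ∈ Finset.Icc 1 k, (-1:ℝ)^(k+1) * ((m+1).choose k) * (1/j) :=
    fun k _ => Finset.mul_sum _ _ _
  rw [Finset.sum_congr rfl h1]
  have hswap : ∑ k ∈ Finset.Icc 1 (m+1), ∑ j ∈ Finset.Icc 1 k,
        (-1:ℝ)^(k+1) * ((m+1).choose k) * (1/j)
      = ∑ j ∈ Finset.Icc 1 (m+1), ∑ k ∈ Finset.Icc j (m+1),
        (-1:ℝ)^(k+1) * ((m+1).choose k) * (1/j) := by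
    apply Finset.sum_comm'
    intro k j
    simp only [Finset.mem_Icc]
    omega
  rw [hswap]
  have h2 : ∀ j ∈ Finset.Icc 1 (m+1),
      ∑ k ∈ Finset.Icc j (m+1), (-1:ℝ)^(k+1) * ((m+1).choose k) * (1/j)
      = (-1)^(j+1) * ((m+1).choose j) * (1/(m+1)) := by
    intro j hj
    simp only [Finset.mem_Icc] at hj
    have h3 : ∑ k ∈ Finset.Icc j (m+1), (-1:ℝ)^(k+1) * ((m+1).choose k)
        = (-1)^(j+1) * (m.choose (j-1)) := by
      have h := alt_icc m j hj.1 hj.2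
      have h4 : ∑ k ∈ Finset.Icc j (m+1), (-1:ℝ)^(k+1) * ((m+1).choose k)
          = -∑ k ∈ Finset.Icc j (m+1), (-1:ℝ)^k * ((m+1).choose k) := by
        rw [← Finset.sum_neg_distrib]
        exact Finset.sum_congr rfl fun k _ => by ring
      rw [h4, h]
      ring
    rw [← Finset.sum_mul, h3]
    obtain ⟨j', rfl⟩ : ∃ j', j = j'+1 := ⟨j-1, by omega⟩
    simp only [Nat.add_sub_cancel]
    have hch : ((m:ℝ)+1) * (m.choose j') = ((m+1).choose (j'+1)) * ((j':ℝ)+1) := by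
      exact_mod_cast congrArg (Nat.cast (R := ℝ)) (Nat.add_one_mul_choose_eq m j')
    have hj0 : ((j':ℝ)+1) ≠ 0 := by positivity
    have hm0 : ((m:ℝ)+1) ≠ 0 := by positivity
    have key : ((m.choose j' : ℕ) : ℝ) / ((j':ℝ)+1)
        = (((m+1).choose (j'+1) : ℕ) : ℝ) / ((m:ℝ)+1) := by
      rw [div_eq_div_iff hj0 hm0]
      linear_combination hch
    push_cast
    linear_combination ((-1:ℝ)^(j'+1+1)) * key
  rw [Finset.sum_congr rfl h2, ← Finset.sum_mul, lemB m, one_mul]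

theorem stmt_5 (n : ℕ) (hn : 0 < n) :
    ∑ k ∈ Finset.Icc 1 n, (n.choose k : ℝ) * (-1) ^ (k + 1) *
        (∑ j ∈ Finset.Icc 1 k, (1 : ℝ) / j) / k =
      ∑ k ∈ Finset.Icc 1 n, (1 : ℝ) / (k : ℝ) ^ 2 := by
  induction n with
  | zero => omega
  | succ n ih =>
    rcases Nat.eq_zero_or_pos n with h0 | hpos
    · subst h0
      norm_num
    · have IH := ih hpos
      have hterm : ∀ k ∈ Finset.Icc 1 (n+1),
          ((n+1).choose k : ℝ) * (-1) ^ (k + 1) * (∑ j ∈ Finset.Icc 1 k, (1 : ℝ) / j) / k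
          = (n.choose k : ℝ) * (-1) ^ (k + 1) * (∑ j ∈ Finset.Icc 1 k, (1 : ℝ) / j) / k
            + (-1)^(k+1) * (((n+1).choose k : ℝ)) * (∑ j ∈ Finset.Icc 1 k, (1 : ℝ) / j)
              * (1/((n:ℝ)+1)) := by
        intro k hk
        simp only [Finset.mem_Icc] at hk
        obtain ⟨j, rfl⟩ : ∃ j, k = j+1 := ⟨k-1, by omega⟩
        have e1 : ((n:ℝ)+1) * (n.choose j) = ((n+1).choose (j+1)) * ((j:ℝ)+1) := by
          exact_mod_cast congrArg (Nat.cast (R := ℝ)) (Nat.add_one_mul_choose_eq n j)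
        have e2 : ((n+1).choose (j+1) : ℝ) = (n.choose j) + (n.choose (j+1)) := by
          exact_mod_cast congrArg (Nat.cast (R := ℝ)) (Nat.choose_succ_succ n j)
        have hj0 : ((j:ℝ)+1) ≠ 0 := by positivity
        have hn0 : ((n:ℝ)+1) ≠ 0 := by positivity
        have key2 : (((n+1).choose (j+1):ℕ):ℝ)/((j:ℝ)+1)
            = ((n.choose (j+1):ℕ):ℝ)/((j:ℝ)+1) + (((n+1).choose (j+1):ℕ):ℝ)/((n:ℝ)+1) := by
          rw [div_add_div _ _ hj0 hn0, div_eq_div_iff hj0 (mul_ne_zero hj0 hn0)]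
          linear_combination (((j:ℝ)+1)*((n:ℝ)+1))*e2 + ((j:ℝ)+1)*e1
        push_cast
        linear_combination ((-1:ℝ)^(j+1+1) * ∑ x ∈ Finset.Icc 1 (j+1), (1:ℝ)/x) * key2
      rw [Finset.sum_congr rfl hterm, Finset.sum_add_distrib]
      have hA : ∑ k ∈ Finset.Icc 1 (n+1),
          (-1:ℝ)^(k+1) * (((n+1).choose k : ℝ)) * (∑ j ∈ Finset.Icc 1 k, (1 : ℝ) / j)
            * (1/((n:ℝ)+1)) = (1/((n:ℝ)+1)) * (1/((n:ℝ)+1)) := by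
        rw [← Finset.sum_mul, lemA n]
      have htop : ∑ k ∈ Finset.Icc 1 (n+1),
          (n.choose k : ℝ) * (-1) ^ (k + 1) * (∑ j ∈ Finset.Icc 1 k, (1 : ℝ) / j) / k
          = ∑ k ∈ Finset.Icc 1 n,
            (n.choose k : ℝ) * (-1) ^ (k + 1) * (∑ j ∈ Finset.Icc 1 k, (1 : ℝ) / j) / k := by
        rw [Finset.sum_Icc_succ_top (by omega)]
        simp [Nat.choose_eq_zero_of_lt (Nat.lt_succ_self n)]
      have hR : ∑ k ∈ Finset.Icc 1 (n+1), (1 : ℝ) / (k : ℝ) ^ 2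
          = (∑ k ∈ Finset.Icc 1 n, (1 : ℝ) / (k : ℝ) ^ 2) + 1/((n:ℝ)+1)^2 := by
        rw [Finset.sum_Icc_succ_top (by omega)]
        push_cast
        ring
      rw [hA, htop, IH, hR]
      have hn0 : ((n:ℝ)+1) ≠ 0 := by positivity
      field_simp
end

section
/- The series ∑_{n=1}^∞ H_n/n² converges and equals 2ζ(3), where H_n is the n-th harmonic number and ζ is the Riemann zeta function. -/
open Finset Filter Topology

noncomputable def Hh (n : ℕ) : ℝ := ∑ k ∈ Finset.range n, (1:ℝ)/(k+1)

lemma Hh_Icc (n : ℕ) : ∑ k ∈ Finset.Icc 1 n, (1:ℝ)/k = Hh n := by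
  induction n with
  | zero => simp [Hh]
  | succ n ih =>
      rw [Finset.sum_Icc_succ_top (by omega), ih]
      show _ = ∑ k ∈ Finset.range (n+1), (1:ℝ)/(k+1)
      rw [Finset.sum_range_succ, ← Hh]
      push_cast
      ring

lemma Hh_nonneg (n : ℕ) : 0 ≤ Hh n := by
  apply Finset.sum_nonneg; intro k _; positivity

lemma Hh_le_sqrt (n : ℕ) : Hh n ≤ 2 * Real.sqrt n := by
  induction n with
  | zero => simp [Hh]
  | succ n ih =>
      rw [Hh, Finset.sum_range_succ, ← Hh]
      have hs : Real.sqrt n ^ 2 = n := Real.sq_sqrt (by positivity)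
      have ht : Real.sqrt (n+1) ^ 2 = (n:ℝ)+1 := by
        rw [Real.sq_sqrt (by positivity)]
      have hs0 : 0 ≤ Real.sqrt n := Real.sqrt_nonneg _
      have ht0 : 0 ≤ Real.sqrt (n+1) := Real.sqrt_nonneg _
      have hle : Real.sqrt (n+1) ≤ (n:ℝ)+1 := by
        nlinarith [ht]
      have key : (1:ℝ)/(n+1) ≤ 2*Real.sqrt (n+1) - 2*Real.sqrt n := by
        rw [div_le_iff₀ (by positivity)]
        nlinarith [sq_nonneg (Real.sqrt (n+1) - Real.sqrt n), hs, ht, hs0, ht0, hle,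
          mul_nonneg hs0 ht0]
      push_cast
      push_cast at ih key
      linarith

lemma summable_shift_pow (p : ℕ) (hp : 1 < p) :
    Summable (fun k : ℕ => (1:ℝ)/((k:ℝ)+1)^p) := by
  have h := (Real.summable_one_div_nat_pow (p := p)).mpr hp
  have h2 := (summable_nat_add_iff 1).mpr h
  refine h2.congr fun k => ?_
  push_cast
  ring

lemma telescope (m : ℕ) :
    HasSum (fun k : ℕ => (1:ℝ)/((k:ℝ)+1) - 1/((k:ℝ)+(m:ℝ)+1)) (Hh m) := by
  set f : ℕ → ℝ := fun k => (1:ℝ)/((k:ℝ)+1) - 1/((k:ℝ)+(m:ℝ)+1) with hf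
  have hnonneg : ∀ k, 0 ≤ f k := by
    intro k
    have : (1:ℝ)/((k:ℝ)+(m:ℝ)+1) ≤ 1/((k:ℝ)+1) := by
      apply one_div_le_one_div_of_le (by positivity)
      have : (0:ℝ) ≤ m := by positivity
      linarith
    simp only [hf]; linarith
  have hsum : Summable f := by
    refine Summable.of_nonneg_of_le hnonneg ?_
      ((summable_shift_pow 2 (by norm_num)).mul_left (m:ℝ))
    · intro k
      have hk1 : (0:ℝ) < (k:ℝ)+1 := by positivity
      have hk2 : (0:ℝ) < (k:ℝ)+(m:ℝ)+1 := by positivity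
      have : f k = (m:ℝ)/(((k:ℝ)+1)*((k:ℝ)+(m:ℝ)+1)) := by
        simp only [hf]; field_simp; try ring
      rw [this]
      have hm0 : (0:ℝ) ≤ m := Nat.cast_nonneg m
      calc (m:ℝ)/(((k:ℝ)+1)*((k:ℝ)+(m:ℝ)+1)) ≤ (m:ℝ)/(((k:ℝ)+1)*((k:ℝ)+1)) := by
            gcongr
            linarith
        _ = (m:ℝ)*(1/((k:ℝ)+1)^2) := by ring
  -- partial sums
  have key : ∀ K : ℕ, ∑ k ∈ Finset.range K, f k
      = Hh m - ∑ k ∈ Finset.range m, (1:ℝ)/((K:ℝ)+(k:ℝ)+1) := by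
    intro K
    have e1 : ∑ k ∈ Finset.range (K+m), (1:ℝ)/((k:ℝ)+1)
        = ∑ k ∈ Finset.range K, (1:ℝ)/((k:ℝ)+1)
          + ∑ k ∈ Finset.range m, (1:ℝ)/((K:ℝ)+(k:ℝ)+1) := by
      rw [Finset.sum_range_add]
      congr 1
      apply Finset.sum_congr rfl
      intro k _
      push_cast
      ring_nf
    have e2 : ∑ k ∈ Finset.range (m+K), (1:ℝ)/((k:ℝ)+1)
        = Hh m + ∑ k ∈ Finset.range K, (1:ℝ)/((k:ℝ)+(m:ℝ)+1) := by
      rw [Finset.sum_range_add, Hh]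
      congr 1
      apply Finset.sum_congr rfl
      intro k _
      push_cast
      ring_nf
    have e3 : (K+m) = (m+K) := by omega
    rw [e3] at e1
    simp only [hf, Finset.sum_sub_distrib]
    rw [e2] at e1
    linarith
  have hzero : Tendsto (fun K : ℕ => ∑ k ∈ Finset.range m, (1:ℝ)/((K:ℝ)+(k:ℝ)+1))
      atTop (𝓝 0) := by
    have hterm : ∀ k : ℕ, Tendsto (fun K : ℕ => (1:ℝ)/((K:ℝ)+(k:ℝ)+1)) atTop (𝓝 0) := by
      intro k
      have h1 : Tendsto (fun K : ℕ => (K:ℝ)+((k:ℝ)+1)) atTop atTop :=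
        Filter.tendsto_atTop_add_const_right atTop ((k:ℝ)+1) tendsto_natCast_atTop_atTop
      have := tendsto_inv_atTop_zero.comp h1
      refine this.congr fun K => ?_
      simp [Function.comp, one_div, add_assoc]
    have := tendsto_finset_sum (Finset.range m)
      (fun k _ => hterm k)
    simpa using this
  rw [hasSum_iff_tendsto_nat_of_nonneg hnonneg]
  have : Tendsto (fun K : ℕ => Hh m - ∑ k ∈ Finset.range m, (1:ℝ)/((K:ℝ)+(k:ℝ)+1))
      atTop (𝓝 (Hh m - 0)) := Tendsto.const_sub _ hzero
  rw [sub_zero] at this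
  exact this.congr fun K => (key K).symm

noncomputable def Fd : ℕ × ℕ → ℝ :=
  fun p => 1/(((p.1:ℝ)+1)*((p.2:ℝ)+1)*((p.1:ℝ)+(p.2:ℝ)+2))

noncomputable def aa : ℕ → ℝ := fun j => Hh (j+1)/((j:ℝ)+1)^2

lemma Fd_nonneg (p : ℕ × ℕ) : 0 ≤ Fd p := by unfold Fd; positivity

lemma row (j : ℕ) : HasSum (fun k => Fd (j, k)) (aa j) := by
  have h := (telescope (j+1)).div_const (((j:ℝ)+1)^2)
  have he : (fun k : ℕ => ((1:ℝ)/((k:ℝ)+1) - 1/((k:ℝ)+((j+1:ℕ):ℝ)+1))/(((j:ℝ)+1)^2))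
      = fun k => Fd (j, k) := by
    funext k
    unfold Fd
    push_cast
    have h1 : ((k:ℝ)+1) ≠ 0 := by positivity
    have h2 : ((k:ℝ)+(j:ℝ)+2) ≠ 0 := by positivity
    have h3 : ((j:ℝ)+1) ≠ 0 := by positivity
    field_simp
    ring
  rw [he] at h
  exact h

lemma aa_nonneg (j : ℕ) : 0 ≤ aa j := by
  unfold aa
  have := Hh_nonneg (j+1)
  positivity

lemma summable_aa : Summable aa := by
  have hmaj : Summable (fun j : ℕ => 2 * (1/((j:ℝ)+1)^((3:ℝ)/2))) := by
    have h := Real.summable_one_div_nat_rpow.mpr (show (1:ℝ) < 3/2 by norm_num)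
    have h2 := (summable_nat_add_iff 1).mpr h
    refine (h2.congr fun j => ?_).mul_left 2
    push_cast
    ring
  refine Summable.of_nonneg_of_le aa_nonneg (fun j => ?_) hmaj
  set x : ℝ := (j:ℝ)+1 with hx
  have hx0 : (0:ℝ) < x := by positivity
  have hb : Hh (j+1) ≤ 2 * x^((1:ℝ)/2) := by
    have := Hh_le_sqrt (j+1)
    have hs : Real.sqrt ((j+1:ℕ):ℝ) = x^((1:ℝ)/2) := by
      rw [Real.sqrt_eq_rpow]
      push_cast
      rfl
    rw [hs] at this
    exact this
  unfold aa
  rw [div_le_iff₀ (by positivity)]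
  have hpow : 2 * (1/x^((3:ℝ)/2)) * x^2 = 2 * x^((1:ℝ)/2) := by
    rw [one_div, ← Real.rpow_neg hx0.le, ← Real.rpow_natCast x 2, mul_assoc,
      ← Real.rpow_add hx0]
    norm_num
  rw [hpow]
  exact hb

lemma summable_Fd : Summable Fd := by
  rw [summable_prod_of_nonneg Fd_nonneg]
  constructor
  · exact fun j => (row j).summable
  · exact summable_aa.congr fun j => ((row j).tsum_eq).symm

lemma tsum_Fd : ∑' p, Fd p = ∑' j, aa j := by
  rw [Summable.tsum_prod' summable_Fd fun j => (row j).summable]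
  exact tsum_congr fun j => (row j).tsum_eq

noncomputable def u1 : ℕ × ℕ → ℝ :=
  fun p => 1/(((p.1:ℝ)+1)*((p.1:ℝ)+(p.2:ℝ)+2)^2)
noncomputable def u2 : ℕ × ℕ → ℝ :=
  fun p => 1/(((p.2:ℝ)+1)*((p.1:ℝ)+(p.2:ℝ)+2)^2)

lemma split (p : ℕ × ℕ) : Fd p = u1 p + u2 p := by
  unfold Fd u1 u2
  have h1 : ((p.1:ℝ)+1) ≠ 0 := by positivity
  have h2 : ((p.2:ℝ)+1) ≠ 0 := by positivity
  have h3 : ((p.1:ℝ)+(p.2:ℝ)+2) ≠ 0 := by positivity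
  field_simp
  ring

lemma u1_nonneg (p : ℕ × ℕ) : 0 ≤ u1 p := by unfold u1; positivity
lemma u2_nonneg (p : ℕ × ℕ) : 0 ≤ u2 p := by unfold u2; positivity

lemma summable_u1 : Summable u1 :=
  summable_Fd.of_nonneg_of_le u1_nonneg fun p => by
    rw [split p]; have := u2_nonneg p; linarith

lemma summable_u2 : Summable u2 :=
  summable_Fd.of_nonneg_of_le u2_nonneg fun p => by
    rw [split p]; have := u1_nonneg p; linarith

lemma tsum_u1_eq_u2 : ∑' p, u1 p = ∑' p, u2 p := by
  have h := Equiv.tsum_eq (Equiv.prodComm ℕ ℕ) u2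
  rw [← h]
  apply tsum_congr
  intro p
  unfold u1 u2
  simp only [Equiv.prodComm_apply, Prod.snd_swap, Prod.fst_swap]
  ring_nf

lemma tsum_Fd_eq_two : ∑' p, Fd p = 2 * ∑' p, u2 p := by
  calc ∑' p, Fd p = ∑' p, (u1 p + u2 p) := tsum_congr split
    _ = ∑' p, u1 p + ∑' p, u2 p := Summable.tsum_add summable_u1 summable_u2
    _ = 2 * ∑' p, u2 p := by rw [tsum_u1_eq_u2]; ring

noncomputable def G : ℕ × ℕ → ℝ :=
  fun p => if p.2 ≤ p.1 then 1/(((p.2:ℝ)+1)*((p.1:ℝ)+2)^2) else 0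

def phi : ℕ × ℕ → ℕ × ℕ := fun p => (p.1 + p.2, p.2)

lemma phi_inj : Function.Injective phi := by
  rintro ⟨a, b⟩ ⟨c, d⟩ h
  simp only [phi, Prod.mk.injEq] at h ⊢
  omega

lemma G_comp (p : ℕ × ℕ) : G (phi p) = u2 p := by
  unfold G phi u2
  simp only []
  rw [if_pos (by omega)]
  push_cast
  ring_nf

lemma G_range (x : ℕ × ℕ) (hx : x ∉ Set.range phi) : G x = 0 := by
  unfold G
  rw [if_neg]
  intro h
  exact hx ⟨(x.1 - x.2, x.2), by simp only [phi]; ext <;> simp <;> omega⟩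

lemma hasSum_G : HasSum G (∑' p, u2 p) := by
  have h : HasSum (G ∘ phi) (∑' p, u2 p) := by
    rw [show G ∘ phi = u2 from funext G_comp]
    exact summable_u2.hasSum
  exact (phi_inj.hasSum_iff G_range).mp h

noncomputable def cc : ℕ → ℝ := fun n => Hh n/((n:ℝ)+1)^2

lemma G_row (n : ℕ) : ∑' k, G (n, k) = cc (n+1) := by
  have h : ∑' k, G (n, k) = ∑ k ∈ Finset.range (n+1), G (n, k) := by
    apply tsum_eq_sum
    intro k hk
    simp only [Finset.mem_range] at hk
    unfold G
    rw [if_neg (by omega)]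
  rw [h]
  unfold cc Hh
  push_cast
  rw [Finset.sum_div]
  apply Finset.sum_congr rfl
  intro k hk
  unfold G
  rw [if_pos (by simp at hk; omega), div_div]
  norm_num
  exact Or.inl (by ring)

lemma G_row_summable (n : ℕ) : Summable fun k => G (n, k) :=
  summable_of_ne_finset_zero (s := Finset.range (n+1)) fun k hk => by
    simp only [Finset.mem_range] at hk
    unfold G
    rw [if_neg (by omega)]

lemma tsum_u2_eq : ∑' p, u2 p = ∑' n, cc (n+1) := by
  rw [← hasSum_G.tsum_eq, Summable.tsum_prod' hasSum_G.summable G_row_summable]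
  exact tsum_congr G_row

lemma cc_le_aa (n : ℕ) : cc n ≤ aa n := by
  unfold cc aa
  have h : Hh n ≤ Hh (n+1) := by
    unfold Hh
    rw [Finset.sum_range_succ]
    have : (0:ℝ) ≤ 1/((n:ℝ)+1) := by positivity
    linarith
  gcongr

lemma cc_nonneg (n : ℕ) : 0 ≤ cc n := by
  unfold cc; have := Hh_nonneg n; positivity

lemma summable_cc : Summable cc :=
  summable_aa.of_nonneg_of_le cc_nonneg cc_le_aa

noncomputable def zz : ℕ → ℝ := fun n => 1/((n:ℝ)+1)^3

lemma summable_zz : Summable zz := summable_shift_pow 3 (by norm_num)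

lemma aa_split (n : ℕ) : aa n = cc n + zz n := by
  unfold aa cc zz
  have hstep : Hh (n+1) = Hh n + 1/((n:ℝ)+1) := by
    unfold Hh
    rw [Finset.sum_range_succ]
  rw [hstep]
  have h1 : ((n:ℝ)+1) ≠ 0 := by positivity
  field_simp

lemma tsum_cc_shift : ∑' n, cc n = ∑' n, cc (n+1) := by
  have hs : Summable fun n => cc (n+1) :=
    summable_cc.comp_injective (add_left_injective 1)
  rw [tsum_eq_zero_add' hs]
  have h0 : cc 0 = 0 := by simp [cc, Hh]
  rw [h0, zero_add]


lemma tsum_aa_split : ∑' n, aa n = ∑' n, cc n + ∑' n, zz n := by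
  rw [tsum_congr aa_split]
  exact Summable.tsum_add summable_cc summable_zz

theorem stmt_11 :
    HasSum (fun n : ℕ =>
        (∑ k ∈ Finset.Icc 1 (n + 1), (1 : ℝ) / k) / ((n + 1 : ℝ) ^ 2))
      (2 * ∑' n : ℕ, (1 : ℝ) / ((n + 1 : ℝ) ^ 3)) := by
  have hkey : ∑' n, aa n = 2 * ∑' n, zz n := by
    have h1 : ∑' n, aa n = 2 * ∑' n, cc n := by
      rw [← tsum_Fd, tsum_Fd_eq_two, tsum_u2_eq, ← tsum_cc_shift]
    have h2 : ∑' n, aa n = ∑' n, cc n + ∑' n, zz n := tsum_aa_split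
    linarith
  have hfun : (fun n : ℕ => (∑ k ∈ Finset.Icc 1 (n+1), (1:ℝ)/k)/((n+1:ℝ)^2)) = aa := by
    funext n
    rw [Hh_Icc]
    rfl
  rw [hfun]
  have h := summable_aa.hasSum
  rw [hkey] at h
  exact h
end
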